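/- Let X ∈ ℝ^{m×n} be a matrix all of whose columns are nonzero, and define the AOL scaling vector s ∈ ℝⁿ by s_i = (Σ_{j=1}^{n} |(XᵀX)_{ij}|)^{−1/2} (well defined since (XᵀX)_{ii} > 0), and let S = diag(s). Then the preconditioned matrix AOL(X) = X·S satisfies S·(XᵀX)·S ⪯ I in the positive semidefinite (Loewner) order; equivalently, the spectral norm of AOL(X) satisfies ‖X·S‖₂ ≤ 1. -/

import Mathlib

open Matrix
open scoped Matrix.Norms.L2Operator MatrixOrder

/-- The spectral norm (`ℓ2 → ℓ2` operator norm) of a real matrix, i.e. its largest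
singular value.  This is Mathlib's scoped L2 operator norm on matrices. -/
noncomputable def matrixSpectralNorm {m n : ℕ} (M : Matrix (Fin m) (Fin n) ℝ) : ℝ := ‖M‖

open Classical in
/-- The unique symmetric positive semidefinite square root of a positive semidefinite
real matrix (junk value `0` if the input is not positive semidefinite). -/
noncomputable def matrixSqrt {n : ℕ} (A : Matrix (Fin n) (Fin n) ℝ) :
    Matrix (Fin n) (Fin n) ℝ :=
  if h : A.PosSemidef then CFC.sqrt A else 0

/-- The polar factor `X (XᵀX)^{-1/2}` of a matrix `X` with full column rank. -/
noncomputable def polarFactor {m n : ℕ} (X : Matrix (Fin m) (Fin n) ℝ) :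
    Matrix (Fin m) (Fin n) ℝ :=
  X * (matrixSqrt (Xᵀ * X))⁻¹

/-- The Frobenius inner product `⟨A, B⟩_F = tr(Aᵀ B)`. -/
noncomputable def frobInner {m n : ℕ} (A B : Matrix (Fin m) (Fin n) ℝ) : ℝ :=
  (Aᵀ * B).trace

/-- AOL preconditioning yields a spectral-norm contraction: with
`s i = (∑ j, |(XᵀX) i j|)^{-1/2}` and `S = diagonal s`, one has
`S (XᵀX) S ⪯ I` in the Loewner order, equivalently `‖X·S‖₂ ≤ 1`. -/
theorem stmt_7 {m n : ℕ} (X : Matrix (Fin m) (Fin n) ℝ)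
    (hcol : ∀ j : Fin n, (fun i => X i j) ≠ 0)
    (s : Fin n → ℝ) (hs : ∀ i, s i = (∑ j, |(Xᵀ * X) i j|) ^ (-(1 / 2 : ℝ))) :
    let S : Matrix (Fin n) (Fin n) ℝ := Matrix.diagonal s
    ((1 : Matrix (Fin n) (Fin n) ℝ) - S * (Xᵀ * X) * S).PosSemidef ∧
      matrixSpectralNorm (X * S) ≤ 1 := by
  intro S
  set A : Matrix (Fin n) (Fin n) ℝ := Xᵀ * X with hA
  have hAsymm : Aᵀ = A := by
    rw [hA, Matrix.transpose_mul, Matrix.transpose_transpose]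
  have hAsymm' : ∀ i j, A j i = A i j := by
    intro i j
    conv_lhs => rw [← hAsymm]
    rfl
  -- positivity of the row sums of |A|
  have htpos : ∀ i : Fin n, 0 < ∑ j, |A i j| := by
    intro i
    have hdiag : 0 < A i i := by
      have hx : ∃ k, X k i ≠ 0 := by
        by_contra h
        push_neg at h
        exact hcol i (funext fun k => h k)
      obtain ⟨k, hk⟩ := hx
      have hAi : A i i = ∑ k, X k i ^ 2 := by
        simp [hA, Matrix.mul_apply, Matrix.transpose_apply, sq]
      rw [hAi]
      exact Finset.sum_pos' (fun k _ => sq_nonneg _)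
        ⟨k, Finset.mem_univ k, by positivity⟩
    calc (0:ℝ) < A i i := hdiag
      _ ≤ |A i i| := le_abs_self _
      _ ≤ ∑ j, |A i j| :=
        Finset.single_le_sum (f := fun j => |A i j|) (fun j _ => abs_nonneg _) (Finset.mem_univ i)
  have hspos : ∀ i, 0 < s i := by
    intro i
    rw [hs]
    exact Real.rpow_pos_of_pos (htpos i) _
  have hs2 : ∀ i, s i ^ 2 * (∑ j, |A i j|) = 1 := by
    intro i
    rw [hs]
    rw [← Real.rpow_natCast ((∑ j, |A i j|) ^ (-(1/2:ℝ))) 2,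
      ← Real.rpow_mul (htpos i).le]
    norm_num
    rw [Real.rpow_neg_one]
    exact inv_mul_cancel₀ (htpos i).ne'
  -- entries of S * A * S
  have hentry : ∀ i j, (S * A * S) i j = s i * A i j * s j := by
    intro i j
    rw [Matrix.mul_diagonal, Matrix.diagonal_mul]
  -- the key quadratic form bound
  have hkey : ∀ x : Fin n → ℝ, x ⬝ᵥ ((S * A * S) *ᵥ x) ≤ x ⬝ᵥ x := by
    intro x
    have hlhs : x ⬝ᵥ ((S * A * S) *ᵥ x) = ∑ i, ∑ j, A i j * ((s i * x i) * (s j * x j)) := by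
      simp only [dotProduct, Matrix.mulVec, dotProduct, hentry,
        Finset.mul_sum]
      exact Finset.sum_congr rfl fun i _ => Finset.sum_congr rfl fun j _ => by ring
    rw [hlhs]
    set a : Fin n → ℝ := fun i => s i * x i with ha
    have step1 : ∑ i, ∑ j, A i j * (a i * a j)
        ≤ ∑ i, ∑ j, |A i j| * ((a i ^ 2 + a j ^ 2) / 2) := by
      refine Finset.sum_le_sum fun i _ => Finset.sum_le_sum fun j _ => ?_
      have h1 : A i j * (a i * a j) ≤ |A i j| * |a i * a j| := by
        calc A i j * (a i * a j) ≤ |A i j * (a i * a j)| := le_abs_self _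
          _ = |A i j| * |a i * a j| := abs_mul _ _
      refine h1.trans (mul_le_mul_of_nonneg_left ?_ (abs_nonneg _))
      rw [abs_mul]
      nlinarith [sq_nonneg (|a i| - |a j|), sq_abs (a i), sq_abs (a j),
        abs_nonneg (a i), abs_nonneg (a j)]
    have step2 : ∑ i, ∑ j, |A i j| * ((a i ^ 2 + a j ^ 2) / 2)
        = ∑ i, (a i ^ 2) * ∑ j, |A i j| := by
      have hsplit : ∀ i j : Fin n, |A i j| * ((a i ^ 2 + a j ^ 2) / 2)
          = |A i j| * a i ^ 2 / 2 + |A i j| * a j ^ 2 / 2 := fun i j => by ring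
      simp only [hsplit, Finset.sum_add_distrib]
      have hswap : ∑ i, ∑ j, |A i j| * a j ^ 2 / 2 = ∑ i, ∑ j, |A i j| * a i ^ 2 / 2 := by
        rw [Finset.sum_comm]
        exact Finset.sum_congr rfl fun i _ => Finset.sum_congr rfl fun j _ => by
          rw [hAsymm' i j]
      rw [hswap]
      rw [← Finset.sum_add_distrib]
      refine Finset.sum_congr rfl fun i _ => ?_
      rw [← Finset.sum_add_distrib, Finset.mul_sum]
      exact Finset.sum_congr rfl fun j _ => by ring
    have step3 : ∑ i, (a i ^ 2) * ∑ j, |A i j| = ∑ i, x i ^ 2 := by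
      refine Finset.sum_congr rfl fun i _ => ?_
      have : a i ^ 2 = s i ^ 2 * x i ^ 2 := by rw [ha]; ring
      rw [this, mul_assoc, mul_comm (x i ^ 2), ← mul_assoc, hs2 i, one_mul]
    have hx2 : x ⬝ᵥ x = ∑ i, x i ^ 2 := by
      simp [dotProduct, sq]
    rw [hx2]
    calc ∑ i, ∑ j, A i j * (a i * a j)
        ≤ ∑ i, ∑ j, |A i j| * ((a i ^ 2 + a j ^ 2) / 2) := step1
      _ = ∑ i, (a i ^ 2) * ∑ j, |A i j| := step2
      _ = ∑ i, x i ^ 2 := step3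
  -- Hermitian-ness
  have hSh : Sᴴ = S := by
    simp [S, Matrix.diagonal_conjTranspose]
  have hSASh : (S * A * S)ᴴ = S * A * S := by
    have hAh : Aᴴ = A := by
      ext i j
      rw [Matrix.conjTranspose_apply, star_trivial]
      exact hAsymm' i j
    rw [Matrix.conjTranspose_mul, Matrix.conjTranspose_mul, hSh, hAh]
    simp only [hA, Matrix.mul_assoc]
  have hpsd : ((1 : Matrix (Fin n) (Fin n) ℝ) - S * A * S).PosSemidef := by
    rw [Matrix.posSemidef_iff_dotProduct_mulVec]
    constructor
    · show (1 - S * A * S)ᴴ = 1 - S * A * S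
      rw [Matrix.conjTranspose_sub, hSASh, Matrix.conjTranspose_one]
    · intro x
      have hx : star x = x := by
        funext i; exact star_trivial _
      rw [hx, Matrix.sub_mulVec, dotProduct_sub, Matrix.one_mulVec]
      have := hkey x
      linarith
  refine ⟨hpsd, ?_⟩
  -- spectral norm bound
  rw [matrixSpectralNorm, Matrix.l2_opNorm_def]
  refine ContinuousLinearMap.opNorm_le_bound _ zero_le_one fun x => ?_
  rw [one_mul]
  set v : Fin n → ℝ := (WithLp.equiv 2 (Fin n → ℝ)) x with hv
  have happ : (Matrix.toEuclideanLin.trans LinearMap.toContinuousLinearMap (X * S)) x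
      = (WithLp.equiv 2 (Fin m → ℝ)).symm ((X * S) *ᵥ v) := rfl
  rw [happ]
  have hnorm1 : ‖(WithLp.equiv 2 (Fin m → ℝ)).symm ((X * S) *ᵥ v)‖
      = Real.sqrt (∑ i, ((X * S) *ᵥ v) i ^ 2) := by
    rw [EuclideanSpace.norm_eq]
    congr 1
    refine Finset.sum_congr rfl fun i _ => ?_
    rw [Real.norm_eq_abs, sq_abs]
    rfl
  have hnorm2 : ‖x‖ = Real.sqrt (∑ i, v i ^ 2) := by
    rw [EuclideanSpace.norm_eq]
    congr 1
    refine Finset.sum_congr rfl fun i _ => ?_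
    rw [Real.norm_eq_abs, sq_abs]
    rfl
  rw [hnorm1, hnorm2]
  apply Real.sqrt_le_sqrt
  -- ∑ ((X*S) *ᵥ v) i ^ 2 ≤ ∑ v i ^ 2
  have hdp : ∑ i, ((X * S) *ᵥ v) i ^ 2 = v ⬝ᵥ ((S * A * S) *ᵥ v) := by
    have h1 : ∑ i, ((X * S) *ᵥ v) i ^ 2 = ((X * S) *ᵥ v) ⬝ᵥ ((X * S) *ᵥ v) := by
      simp [dotProduct, sq]
    have h2 : ((X * S) *ᵥ v) ⬝ᵥ ((X * S) *ᵥ v)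
        = (((X * S)ᵀ * (X * S)) *ᵥ v) ⬝ᵥ v := by
      rw [dotProduct_mulVec, ← Matrix.mulVec_transpose, Matrix.mulVec_mulVec]
    have h3 : (X * S)ᵀ * (X * S) = S * A * S := by
      rw [Matrix.transpose_mul]
      have hSt : Sᵀ = S := Matrix.diagonal_transpose s
      rw [hSt, hA, Matrix.mul_assoc, ← Matrix.mul_assoc Xᵀ X S, ← Matrix.mul_assoc]
    rw [h1, h2, h3, dotProduct_comm]
  rw [hdp]
  have := hkey v
  have hvv : v ⬝ᵥ v = ∑ i, v i ^ 2 := by simp [dotProduct, sq]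
  linarith [hkey v, hvv ▸ hkey v]
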